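/- Let V be a finite-dimensional real inner product space, W a finite group of linear isometries of V, σ : W → {+1, −1} a group homomorphism, and M ≥ 1 an integer; for b ∈ V define φ^σ_b : V → ℂ by φ^σ_b(a) = Σ_{w ∈ W} σ(w)·exp(2πi⟨w·b, a⟩). Let Q∨ ⊆ P∨ be W-invariant additive subgroups of V, let P be an additive subgroup of V with ⟨λ, q⟩ ∈ ℤ for all λ ∈ P and q ∈ Q∨, and set Q = {v ∈ V : ⟨v, p⟩ ∈ ℤ for all p ∈ P∨}. Let ρ ∈ V satisfy ρ − w·ρ ∈ P for all w ∈ W, let ρ∨ ∈ V satisfy ρ∨ − w·ρ∨ ∈ P∨ for all w ∈ W, and let b ∈ ρ + P. Let Y be a finite subset of V such that y ↦ y + Q∨ is a bijection from Y onto the set of cosets {v + Q∨ : v ∈ V, M·v − ρ∨ ∈ P∨}. If σ(w)·exp(2πi⟨b − w·b, ρ∨⟩/M) = 1 for every w ∈ W with b − w·b ∈ M·Q, then Σ_{y ∈ Y} |φ^σ_b(y)|² = |W|·|Y|·#{w ∈ W : b − w·b ∈ M·Q}. -/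

import Mathlib

/-- The orbit function `φ^σ_b(a) = Σ_{w ∈ W} σ(w) · exp(2πi⟪w b, a⟫)` attached to a
finite group `W` of linear isometries and a sign homomorphism `σ : W → {±1}`. -/
noncomputable def orbitFn {V : Type*} [NormedAddCommGroup V] [InnerProductSpace ℝ V]
    (W : Subgroup (V ≃ₗᵢ[ℝ] V)) [Fintype W] (σ : W →* ℤˣ) (b a : V) : ℂ :=
  ∑ w : W, ((σ w : ℤ) : ℂ) *
    Complex.exp (2 * Real.pi * Complex.I * ((inner ℝ ((w : V ≃ₗᵢ[ℝ] V) b) a : ℝ) : ℂ))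

noncomputable def ee (t : ℝ) : ℂ := Complex.exp (2 * Real.pi * Complex.I * (t : ℂ))

lemma ee_add (s t : ℝ) : ee (s + t) = ee s * ee t := by
  rw [ee, ee, ee, ← Complex.exp_add]
  congr 1
  push_cast
  ring

lemma ee_int (m : ℤ) : ee (m : ℝ) = 1 := by
  rw [ee]
  push_cast
  simpa [mul_comm] using Complex.exp_int_mul_two_pi_mul_I m

lemma ee_add_int (s : ℝ) (m : ℤ) : ee (s + (m : ℝ)) = ee s := by
  rw [ee_add, ee_int, mul_one]

lemma ee_sub_int (s : ℝ) (m : ℤ) : ee (s - (m : ℝ)) = ee s := by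
  have := ee_add_int s (-m)
  rwa [Int.cast_neg, ← sub_eq_add_neg] at this

lemma ee_eq_one_iff (t : ℝ) : ee t = 1 ↔ ∃ m : ℤ, t = (m : ℝ) := by
  rw [ee, Complex.exp_eq_one_iff]
  constructor
  · rintro ⟨n, hn⟩
    refine ⟨n, ?_⟩
    have h2 : (2 * (Real.pi : ℂ) * Complex.I) ≠ 0 := by
      simp [Real.pi_ne_zero, Complex.I_ne_zero]
    have h3 : (t : ℂ) = (n : ℂ) := by
      apply mul_left_cancel₀ h2
      rw [hn]; ring
    exact_mod_cast h3
  · rintro ⟨m, rfl⟩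
    exact ⟨m, by push_cast; ring⟩

lemma ee_conj (t : ℝ) : (starRingEnd ℂ) (ee t) = ee (-t) := by
  rw [ee, ee, ← Complex.exp_conj]
  congr 1
  simp only [map_mul, Complex.conj_I, Complex.conj_ofReal, map_ofNat, Complex.ofReal_neg]
  ring

lemma sum_ee_full {V : Type*} [NormedAddCommGroup V] [InnerProductSpace ℝ V]
    (Qv Pv : AddSubgroup V) (M : ℕ) (hM0 : (M : ℝ) ≠ 0) (ρv : V) (Y : Finset V)
    (hY : Set.BijOn (fun y => (QuotientAddGroup.mk y : V ⧸ Qv)) ↑Y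
      {x : V ⧸ Qv | ∃ v : V, (M : ℝ) • v - ρv ∈ Pv ∧ QuotientAddGroup.mk v = x})
    (c : V) (hper : ∀ q ∈ Qv, ∃ m : ℤ, (inner ℝ c q : ℝ) = m)
    (hfull : ∀ p ∈ Pv, ∃ m : ℤ, (inner ℝ c p : ℝ) = (M : ℝ) * m) :
    ∑ y ∈ Y, ee (inner ℝ c y : ℝ) = (Y.card : ℂ) * ee ((inner ℝ c ρv : ℝ) / M) := by
  have hconst : ∀ y ∈ Y, ee (inner ℝ c y : ℝ) = ee ((inner ℝ c ρv : ℝ) / M) := by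
    intro y hy
    obtain ⟨v, hv, hmkv⟩ := hY.mapsTo hy
    have hq : -v + y ∈ Qv := by rwa [QuotientAddGroup.eq] at hmkv
    obtain ⟨m₁, hm₁⟩ := hper _ hq
    obtain ⟨m₂, hm₂⟩ := hfull _ hv
    have hsplit : (inner ℝ c y : ℝ) = (inner ℝ c v : ℝ) + (inner ℝ c (-v + y) : ℝ) := by
      rw [← inner_add_right]
      rw [add_neg_cancel_left]
    have h4 : (M : ℝ) * (inner ℝ c v : ℝ) - (inner ℝ c ρv : ℝ) = (M : ℝ) * m₂ := by
      rw [← real_inner_smul_right, ← inner_sub_right]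
      exact hm₂
    have h5 : (inner ℝ c v : ℝ) = (inner ℝ c ρv : ℝ) / M + m₂ := by
      field_simp at h4 ⊢
      linarith
    have hval : (inner ℝ c y : ℝ) = (inner ℝ c ρv : ℝ) / M + ((m₂ + m₁ : ℤ) : ℝ) := by
      rw [hsplit, h5, hm₁]; push_cast; ring
    rw [hval, ee_add_int]
  rw [Finset.sum_congr rfl hconst, Finset.sum_const, nsmul_eq_mul]

lemma sum_ee_zero {V : Type*} [NormedAddCommGroup V] [InnerProductSpace ℝ V]
    (Qv Pv : AddSubgroup V) (M : ℕ) (hM0 : (M : ℝ) ≠ 0) (ρv : V) (Y : Finset V)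
    (hY : Set.BijOn (fun y => (QuotientAddGroup.mk y : V ⧸ Qv)) ↑Y
      {x : V ⧸ Qv | ∃ v : V, (M : ℝ) • v - ρv ∈ Pv ∧ QuotientAddGroup.mk v = x})
    (c : V) (hper : ∀ q ∈ Qv, ∃ m : ℤ, (inner ℝ c q : ℝ) = m)
    (p₀ : V) (hp₀Pv : p₀ ∈ Pv) (hp₀ : ¬ ∃ m : ℤ, (inner ℝ c p₀ : ℝ) = (M : ℝ) * m) :
    ∑ y ∈ Y, ee (inner ℝ c y : ℝ) = 0 := by
  classical
  set t : V := (M : ℝ)⁻¹ • p₀ with ht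
  have hMt : (M : ℝ) • t = p₀ := by
    rw [ht, smul_smul, mul_inv_cancel₀ hM0, one_smul]
  -- well-definedness of v ↦ ee ⟪c, v⟫ on the quotient
  have hcongr : ∀ v v' : V, (QuotientAddGroup.mk v : V ⧸ Qv) = QuotientAddGroup.mk v' →
      ee (inner ℝ c v : ℝ) = ee (inner ℝ c v' : ℝ) := by
    intro v v' h
    rw [QuotientAddGroup.eq] at h
    obtain ⟨m, hm⟩ := hper _ h
    have hsplit : (inner ℝ c v' : ℝ) = (inner ℝ c v : ℝ) + ((m : ℤ) : ℝ) := by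
      rw [← hm, ← inner_add_right, add_neg_cancel_left]
    rw [hsplit, ee_add_int]
  set E : V ⧸ Qv → ℂ := fun x => ee (inner ℝ c (Quotient.out x) : ℝ) with hE
  have hEmk : ∀ v : V, E (QuotientAddGroup.mk v) = ee (inner ℝ c v : ℝ) := by
    intro v
    exact hcongr _ _ (QuotientAddGroup.out_eq' _)
  set T' : Finset (V ⧸ Qv) := Y.image (fun y => (QuotientAddGroup.mk y : V ⧸ Qv)) with hT'
  have himg : ∀ x : V ⧸ Qv, x ∈ T' ↔
      ∃ v : V, (M : ℝ) • v - ρv ∈ Pv ∧ QuotientAddGroup.mk v = x := by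
    intro x
    rw [hT', ← Finset.mem_coe, Finset.coe_image, hY.image_eq]
    rfl
  have hkey : ∑ y ∈ Y, ee (inner ℝ c y : ℝ) = ∑ x ∈ T', E x := by
    rw [hT', Finset.sum_image (fun x hx y hy h => hY.injOn hx hy h)]
    exact Finset.sum_congr rfl fun y _ => (hEmk y).symm
  -- translation invariance of T'
  have hshift : ∀ s : V, (M : ℝ) • s ∈ Pv → ∀ x ∈ T', x + QuotientAddGroup.mk s ∈ T' := by
    intro s hs x hx
    obtain ⟨v, hv, rfl⟩ := (himg x).mp hx
    refine (himg _).mpr ⟨v + s, ?_, rfl⟩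
    have : (M : ℝ) • (v + s) - ρv = ((M : ℝ) • v - ρv) + (M : ℝ) • s := by
      rw [smul_add]; abel
    rw [this]
    exact Pv.add_mem hv hs
  have hMtPv : (M : ℝ) • t ∈ Pv := by rw [hMt]; exact hp₀Pv
  have hMtPv' : (M : ℝ) • (-t) ∈ Pv := by
    rw [smul_neg]
    exact Pv.neg_mem hMtPv
  have hEt : ∀ x : V ⧸ Qv, E (x + QuotientAddGroup.mk t) = E x * ee (inner ℝ c t : ℝ) := by
    intro x
    induction x using QuotientAddGroup.induction_on with
    | H v =>
      rw [show (QuotientAddGroup.mk v + QuotientAddGroup.mk t : V ⧸ Qv)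
        = QuotientAddGroup.mk (v + t) from rfl, hEmk, hEmk, inner_add_right, ee_add]
  have htrans : ∑ x ∈ T', E x = ∑ x ∈ T', E (x + QuotientAddGroup.mk t) := by
    refine Finset.sum_nbij' (fun x => x - QuotientAddGroup.mk t)
      (fun x => x + QuotientAddGroup.mk t) ?_ ?_ ?_ ?_ ?_
    · intro x hx
      have := hshift (-t) hMtPv' x hx
      simpa [sub_eq_add_neg] using this
    · intro x hx
      exact hshift t hMtPv x hx
    · intro x _; simp
    · intro x _; simp
    · intro x _
      rw [sub_add_cancel]
  have hne : ee (inner ℝ c t : ℝ) ≠ 1 := by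
    intro h
    obtain ⟨m, hm⟩ := (ee_eq_one_iff _).mp h
    apply hp₀
    refine ⟨m, ?_⟩
    rw [ht] at hm
    rw [real_inner_smul_right] at hm
    field_simp at hm
    linarith
  have hmain : (∑ x ∈ T', E x) * (1 - ee (inner ℝ c t : ℝ)) = 0 := by
    rw [mul_sub, mul_one, sub_eq_zero]
    conv_lhs => rw [htrans]
    rw [Finset.sum_mul]
    exact Finset.sum_congr rfl fun x _ => hEt x
  rw [hkey]
  rcases mul_eq_zero.mp hmain with h | h
  · exact h
  · exact absurd (sub_eq_zero.mp h).symm hne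



/-- the diagonal (norm) case of the discrete orthogonality of orbit
functions: in the situation of Statement 16, if
`σ(w)·exp(2πi⟪b - w·b, ρ∨⟫/M) = 1` for every `w ∈ W` with `b - w·b ∈ M·Q`, then
`Σ_{y ∈ Y} |φ^σ_b(y)|² = |W|·|Y|·#{w ∈ W : b - w·b ∈ M·Q}`. -/
theorem stmt_18 {V : Type*} [NormedAddCommGroup V] [InnerProductSpace ℝ V]
    [FiniteDimensional ℝ V]
    (W : Subgroup (V ≃ₗᵢ[ℝ] V)) [Fintype W] (σ : W →* ℤˣ) (M : ℕ) (hM : 1 ≤ M)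
    (Qv Pv : AddSubgroup V) (hQvPv : Qv ≤ Pv)
    (hQvW : ∀ w : W, ∀ q ∈ Qv, (w : V ≃ₗᵢ[ℝ] V) q ∈ Qv)
    (hPvW : ∀ w : W, ∀ p ∈ Pv, (w : V ≃ₗᵢ[ℝ] V) p ∈ Pv)
    (P : AddSubgroup V) (hdual : ∀ l ∈ P, ∀ q ∈ Qv, ∃ m : ℤ, (inner ℝ l q : ℝ) = m)
    (Q : Set V) (hQ : Q = {v : V | ∀ p ∈ Pv, ∃ m : ℤ, (inner ℝ v p : ℝ) = m})
    (ρ : V) (hρ : ∀ w : W, ρ - (w : V ≃ₗᵢ[ℝ] V) ρ ∈ P)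
    (ρv : V) (hρv : ∀ w : W, ρv - (w : V ≃ₗᵢ[ℝ] V) ρv ∈ Pv)
    (b : V) (hb : b - ρ ∈ P)
    (Y : Finset V)
    (hY : Set.BijOn (fun y => (QuotientAddGroup.mk y : V ⧸ Qv)) ↑Y
      {x : V ⧸ Qv | ∃ v : V, (M : ℝ) • v - ρv ∈ Pv ∧ QuotientAddGroup.mk v = x})
    (hstab : ∀ w : W, (∃ q ∈ Q, b - (w : V ≃ₗᵢ[ℝ] V) b = (M : ℝ) • q) →
      ((σ w : ℤ) : ℂ) * Complex.exp (2 * Real.pi * Complex.I *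
        (((inner ℝ (b - (w : V ≃ₗᵢ[ℝ] V) b) ρv : ℝ) / (M : ℝ) : ℝ) : ℂ)) = 1) :
    ∑ y ∈ Y, ‖orbitFn W σ b y‖ ^ 2 =
      (Fintype.card W : ℝ) * (Y.card : ℝ) *
        ({w : W | ∃ q ∈ Q, b - (w : V ≃ₗᵢ[ℝ] V) b = (M : ℝ) • q}.ncard : ℝ) := by
  classical
  have hM0 : (M : ℝ) ≠ 0 := by
    have : (0 : ℝ) < M := by exact_mod_cast hM
    linarith
  -- inner ℝ product with isometry moved to the other side
  have hWinv : ∀ (w : W) (x z : V),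
      (inner ℝ ((w : V ≃ₗᵢ[ℝ] V) x) z : ℝ) = inner ℝ x (((w⁻¹ : W) : V ≃ₗᵢ[ℝ] V) z) := by
    intro w x z
    have h1 : (w : V ≃ₗᵢ[ℝ] V) (((w⁻¹ : W) : V ≃ₗᵢ[ℝ] V) z) = z :=
      (w : V ≃ₗᵢ[ℝ] V).apply_symm_apply z
    rw [← (w : V ≃ₗᵢ[ℝ] V).inner_map_map x (((w⁻¹ : W) : V ≃ₗᵢ[ℝ] V) z), h1]
  -- integrality of pairings ⟪b - u b, q⟫ for q ∈ Qv
  have hdb : ∀ (u : W), ∀ q ∈ Qv, ∃ m : ℤ, (inner ℝ (b - (u : V ≃ₗᵢ[ℝ] V) b) q : ℝ) = m := by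
    intro u q hq
    obtain ⟨m₁, hm₁⟩ := hdual _ hb _ hq
    obtain ⟨m₂, hm₂⟩ := hdual _ (hρ u) _ hq
    obtain ⟨m₃, hm₃⟩ := hdual _ hb _ (hQvW u⁻¹ q hq)
    refine ⟨m₁ + m₂ - m₃, ?_⟩
    have hdecomp : b - (u : V ≃ₗᵢ[ℝ] V) b
        = (b - ρ) + (ρ - (u : V ≃ₗᵢ[ℝ] V) ρ) + ((u : V ≃ₗᵢ[ℝ] V) ρ - (u : V ≃ₗᵢ[ℝ] V) b) := by
      abel
    have h4 : (inner ℝ ((u : V ≃ₗᵢ[ℝ] V) ρ - (u : V ≃ₗᵢ[ℝ] V) b) q : ℝ)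
        = - (inner ℝ (b - ρ) (((u⁻¹ : W) : V ≃ₗᵢ[ℝ] V) q) : ℝ) := by
      rw [← map_sub, hWinv u (ρ - b) q]
      rw [show ρ - b = -(b - ρ) by abel, inner_neg_left]
    rw [hdecomp, inner_add_left, inner_add_left, h4, hm₁, hm₂, hm₃]
    push_cast
    ring
  -- the stabilizer predicate
  have hone : ∀ w : W, ((σ w : ℤ) : ℂ) * ((σ w : ℤ) : ℂ) = 1 := by
    intro w
    have h3 : ((σ w : ℤ) : ℂ) * ((σ w : ℤ) : ℂ) = (((σ w * σ w : ℤˣ) : ℤ) : ℂ) := by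
      rw [Units.val_mul]
      push_cast
      ring
    rw [h3, Int.units_mul_self]
    simp
  -- per-pair term computation
  have term : ∀ w u : W,
      ((σ w : ℤ) : ℂ) * ((σ (w * u) : ℤ) : ℂ) *
        (∑ y ∈ Y, ee (inner ℝ ((w : V ≃ₗᵢ[ℝ] V) b - ((w * u : W) : V ≃ₗᵢ[ℝ] V) b) y : ℝ))
      = if (∃ q ∈ Q, b - (u : V ≃ₗᵢ[ℝ] V) b = (M : ℝ) • q) then (Y.card : ℂ) else 0 := by
    intro w u
    have hc : (w : V ≃ₗᵢ[ℝ] V) b - ((w * u : W) : V ≃ₗᵢ[ℝ] V) b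
        = (w : V ≃ₗᵢ[ℝ] V) (b - (u : V ≃ₗᵢ[ℝ] V) b) := by
      rw [map_sub]
      rfl
    have hperc : ∀ q ∈ Qv, ∃ m : ℤ,
        (inner ℝ ((w : V ≃ₗᵢ[ℝ] V) (b - (u : V ≃ₗᵢ[ℝ] V) b)) q : ℝ) = m := by
      intro q hq
      rw [hWinv w]
      exact hdb u _ (hQvW w⁻¹ q hq)
    by_cases hu : ∃ q ∈ Q, b - (u : V ≃ₗᵢ[ℝ] V) b = (M : ℝ) • q
    · obtain ⟨q, hqQ, hq⟩ := hu
      rw [hQ] at hqQ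
      have hfull : ∀ p ∈ Pv, ∃ m : ℤ,
          (inner ℝ ((w : V ≃ₗᵢ[ℝ] V) (b - (u : V ≃ₗᵢ[ℝ] V) b)) p : ℝ) = (M : ℝ) * m := by
        intro p hp
        obtain ⟨m, hm⟩ := hqQ _ (hPvW w⁻¹ p hp)
        refine ⟨m, ?_⟩
        rw [hWinv w, hq, real_inner_smul_left, hm]
      rw [hc, sum_ee_full Qv Pv M hM0 ρv Y hY _ hperc hfull]
      -- compare the phase at ρv with the one at w⁻¹ ρv
      obtain ⟨m₀, hm₀⟩ := hqQ _ (hρv w⁻¹)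
      have hphase : (inner ℝ ((w : V ≃ₗᵢ[ℝ] V) (b - (u : V ≃ₗᵢ[ℝ] V) b)) ρv : ℝ) / M
          = (inner ℝ (b - (u : V ≃ₗᵢ[ℝ] V) b) ρv : ℝ) / M - (m₀ : ℝ) := by
        rw [hWinv w]
        have hsplit : ((w⁻¹ : W) : V ≃ₗᵢ[ℝ] V) ρv = ρv - (ρv - ((w⁻¹ : W) : V ≃ₗᵢ[ℝ] V) ρv) := by
          abel
        rw [hsplit, inner_sub_right, hq, real_inner_smul_left, real_inner_smul_left, hm₀]
        field_simp
      rw [hphase, ee_sub_int]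
      have hs : ((σ u : ℤ) : ℂ) * ee ((inner ℝ (b - (u : V ≃ₗᵢ[ℝ] V) b) ρv : ℝ) / M) = 1 :=
        hstab u ⟨q, by rw [hQ]; exact hqQ, hq⟩
      have hσ : ((σ w : ℤ) : ℂ) * ((σ (w * u) : ℤ) : ℂ) = ((σ u : ℤ) : ℂ) := by
        rw [map_mul]
        push_cast [Units.val_mul]
        rw [← mul_assoc, hone w, one_mul]
      rw [if_pos]
      · rw [hσ]
        calc ((σ u : ℤ) : ℂ) * ((Y.card : ℂ) * ee ((inner ℝ (b - (u : V ≃ₗᵢ[ℝ] V) b) ρv : ℝ) / M))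
            = (Y.card : ℂ) * (((σ u : ℤ) : ℂ) * ee ((inner ℝ (b - (u : V ≃ₗᵢ[ℝ] V) b) ρv : ℝ) / M)) := by ring
          _ = (Y.card : ℂ) := by rw [hs, mul_one]
      · exact ⟨q, by rw [hQ]; exact hqQ, hq⟩
    · rw [if_neg hu]
      have hex : ∃ p₀ ∈ Pv, ¬ ∃ m : ℤ,
          (inner ℝ ((w : V ≃ₗᵢ[ℝ] V) (b - (u : V ≃ₗᵢ[ℝ] V) b)) p₀ : ℝ) = (M : ℝ) * m := by
        by_contra h
        push_neg at h
        apply hu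
        refine ⟨(M : ℝ)⁻¹ • (b - (u : V ≃ₗᵢ[ℝ] V) b), ?_, ?_⟩
        · rw [hQ]
          intro p hp
          obtain ⟨m, hm⟩ := h ((w : V ≃ₗᵢ[ℝ] V) p) (hPvW w p hp)
          rw [(w : V ≃ₗᵢ[ℝ] V).inner_map_map] at hm
          refine ⟨m, ?_⟩
          rw [real_inner_smul_left, hm]
          field_simp
        · rw [smul_smul, mul_inv_cancel₀ hM0, one_smul]
      obtain ⟨p₀, hp₀Pv, hp₀⟩ := hex
      rw [hc, sum_ee_zero Qv Pv M hM0 ρv Y hY _ hperc p₀ hp₀Pv hp₀, mul_zero]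
  -- expansion of |φ|²
  have expand : ∀ y : V, ((‖orbitFn W σ b y‖ ^ 2 : ℝ) : ℂ)
      = ∑ w : W, ∑ w' : W, ((σ w : ℤ) : ℂ) * ((σ w' : ℤ) : ℂ) *
          ee (inner ℝ ((w : V ≃ₗᵢ[ℝ] V) b - (w' : V ≃ₗᵢ[ℝ] V) b) y : ℝ) := by
    intro y
    have h1 : ((‖orbitFn W σ b y‖ ^ 2 : ℝ) : ℂ)
        = orbitFn W σ b y * (starRingEnd ℂ) (orbitFn W σ b y) := by
      rw [Complex.mul_conj]
      norm_cast
      exact Complex.sq_norm _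
    rw [h1, orbitFn, map_sum, Finset.sum_mul_sum]
    refine Finset.sum_congr rfl fun w _ => Finset.sum_congr rfl fun w' _ => ?_
    have h2 : (starRingEnd ℂ) (((σ w' : ℤ) : ℂ) *
        Complex.exp (2 * Real.pi * Complex.I * ((inner ℝ ((w' : V ≃ₗᵢ[ℝ] V) b) y : ℝ) : ℂ)))
        = ((σ w' : ℤ) : ℂ) * ee (-(inner ℝ ((w' : V ≃ₗᵢ[ℝ] V) b) y : ℝ)) := by
      rw [map_mul, ← ee_conj]
      congr 1
      exact map_intCast (starRingEnd ℂ) (σ w' : ℤ)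
    rw [h2]
    have h3 : (inner ℝ ((w : V ≃ₗᵢ[ℝ] V) b - (w' : V ≃ₗᵢ[ℝ] V) b) y : ℝ)
        = (inner ℝ ((w : V ≃ₗᵢ[ℝ] V) b) y : ℝ) + (-(inner ℝ ((w' : V ≃ₗᵢ[ℝ] V) b) y : ℝ)) := by
      rw [inner_sub_left]
      ring
    rw [h3, ee_add]
    show (((σ w : ℤ) : ℂ) * ee (inner ℝ ((w : V ≃ₗᵢ[ℝ] V) b) y : ℝ)) *
        (((σ w' : ℤ) : ℂ) * ee (-(inner ℝ ((w' : V ≃ₗᵢ[ℝ] V) b) y : ℝ))) = _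
    ring
  -- the complex-valued main computation
  have main : (∑ y ∈ Y, ((‖orbitFn W σ b y‖ ^ 2 : ℝ) : ℂ))
      = (Fintype.card W : ℂ) * ((Y.card : ℂ) *
          ((Finset.univ.filter
            (fun u : W => ∃ q ∈ Q, b - (u : V ≃ₗᵢ[ℝ] V) b = (M : ℝ) • q)).card : ℂ)) := by
    calc (∑ y ∈ Y, ((‖orbitFn W σ b y‖ ^ 2 : ℝ) : ℂ))
        = ∑ y ∈ Y, ∑ w : W, ∑ w' : W, ((σ w : ℤ) : ℂ) * ((σ w' : ℤ) : ℂ) *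
            ee (inner ℝ ((w : V ≃ₗᵢ[ℝ] V) b - (w' : V ≃ₗᵢ[ℝ] V) b) y : ℝ) :=
          Finset.sum_congr rfl fun y _ => expand y
      _ = ∑ w : W, ∑ w' : W, ((σ w : ℤ) : ℂ) * ((σ w' : ℤ) : ℂ) *
            ∑ y ∈ Y, ee (inner ℝ ((w : V ≃ₗᵢ[ℝ] V) b - (w' : V ≃ₗᵢ[ℝ] V) b) y : ℝ) := by
          rw [Finset.sum_comm]
          refine Finset.sum_congr rfl fun w _ => ?_
          rw [Finset.sum_comm]
          exact Finset.sum_congr rfl fun w' _ => (Finset.mul_sum _ _ _).symm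
      _ = ∑ w : W, ∑ u : W, ((σ w : ℤ) : ℂ) * ((σ (w * u) : ℤ) : ℂ) *
            ∑ y ∈ Y, ee (inner ℝ ((w : V ≃ₗᵢ[ℝ] V) b - ((w * u : W) : V ≃ₗᵢ[ℝ] V) b) y : ℝ) := by
          refine Finset.sum_congr rfl fun w _ => ?_
          exact (Equiv.sum_comp (Equiv.mulLeft w) _).symm
      _ = ∑ w : W, ∑ u : W,
            (if (∃ q ∈ Q, b - (u : V ≃ₗᵢ[ℝ] V) b = (M : ℝ) • q) then (Y.card : ℂ) else 0) := by
          exact Finset.sum_congr rfl fun w _ => Finset.sum_congr rfl fun u _ => term w u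
      _ = ∑ w : W, ((Finset.univ.filter
            (fun u : W => ∃ q ∈ Q, b - (u : V ≃ₗᵢ[ℝ] V) b = (M : ℝ) • q)).card : ℂ) * (Y.card : ℂ) := by
          refine Finset.sum_congr rfl fun w _ => ?_
          rw [← Finset.sum_filter, Finset.sum_const, nsmul_eq_mul]
      _ = (Fintype.card W : ℂ) * ((Y.card : ℂ) *
            ((Finset.univ.filter
              (fun u : W => ∃ q ∈ Q, b - (u : V ≃ₗᵢ[ℝ] V) b = (M : ℝ) • q)).card : ℂ)) := by
          rw [Finset.sum_const, Finset.card_univ, nsmul_eq_mul]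
          ring
  -- conclude over ℝ
  have hnc : ({w : W | ∃ q ∈ Q, b - (w : V ≃ₗᵢ[ℝ] V) b = (M : ℝ) • q}.ncard)
      = (Finset.univ.filter
          (fun u : W => ∃ q ∈ Q, b - (u : V ≃ₗᵢ[ℝ] V) b = (M : ℝ) • q)).card := by
    rw [Set.ncard_eq_toFinset_card', Set.toFinset_setOf]
  apply Complex.ofReal_injective
  rw [Complex.ofReal_sum]
  rw [main, hnc]
  push_cast
  ring
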